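/- Let G be a finite connected graph with vertex set V, edge relation ~, and edge length δ>0, and let d denote the induced path metric. Let K ⊆ V be a nonempty set with boundary ∂K = {y ∉ K : ∃x∈K, y~x}, and suppose every vertex of K is connected within K to some boundary vertex. If u,v : V → ℝ satisfy Δ∞u(x) ≥ 0 and Δ∞v(x) ≤ 0 for all x ∈ K, where Δ∞w(x) = max_{y~x}(w(y)−w(x)) + min_{y~x}(w(y)−w(x)), and u ≤ v on ∂K, then u ≤ v on K ∪ ∂K. -/

import Mathlib

open Filter Topology
open scoped Classical

noncomputable section

variable {V : Type*}

/-- A path from `x` to `y` whose interior vertices `l` all lie in `K`. -/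
def pathIn (adj : V → V → Prop) (K : Set V) (x y : V) (l : List V) : Prop :=
  List.Chain adj x (l ++ [y]) ∧ ∀ z ∈ l, z ∈ K

/-- The restricted path metric `d_K` (edge length `δ`), via paths with interior in `K`. -/
def dK (adj : V → V → Prop) (K : Set V) (δ : ℝ) (x y : V) : ℝ :=
  if x = y then 0
  else sInf {r : ℝ | ∃ l : List V, pathIn adj K x y l ∧ r = δ * (l.length + 1)}

/-- The boundary of a vertex set `K`. -/
def bdry (adj : V → V → Prop) (K : Set V) : Set V :=
  {y | y ∉ K ∧ ∃ x ∈ K, adj x y}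

/-- The graph infinity Laplacian. -/
def lapInf (adj : V → V → Prop) (u : V → ℝ) (x : V) : ℝ :=
  sSup ((fun y => u y - u x) '' {y | adj x y}) +
    sInf ((fun y => u y - u x) '' {y | adj x y})

/-- The local Lipschitz constant `F(u,x)` at a vertex `x`. -/
def locLip (adj : V → V → Prop) (δ : ℝ) (u : V → ℝ) (x : V) : ℝ :=
  sSup ((fun y => |u x - u y| / δ) '' {y | adj x y})

/-- The Lipschitz constant of `u` over the set `A`, measured in the metric `d_K`. -/
def LipOn (adj : V → V → Prop) (K A : Set V) (δ : ℝ) (u : V → ℝ) : ℝ :=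
  sSup {r : ℝ | ∃ x ∈ A, ∃ y ∈ A, x ≠ y ∧ r = |u x - u y| / dK adj K δ x y}

/-- `K` is connected: any two points of `K ∪ ∂K` are joined by a path through `K`. -/
def connectedIn (adj : V → V → Prop) (K : Set V) : Prop :=
  ∀ x ∈ K ∪ bdry adj K, ∀ y ∈ K ∪ bdry adj K, x ≠ y → ∃ l, pathIn adj K x y l

/-- Comparison principle for the graph infinity Laplacian. -/
theorem stmt0 [Fintype V] (adj : V → V → Prop) (hsymm : ∀ x y, adj x y → adj y x)
    (δ : ℝ) (hδ : 0 < δ) (K : Set V) (hK : K.Nonempty)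
    (hconn : ∀ x ∈ K, ∃ y ∈ bdry adj K, ∃ l, pathIn adj K x y l)
    (u v : V → ℝ)
    (hu : ∀ x ∈ K, 0 ≤ lapInf adj u x)
    (hv : ∀ x ∈ K, lapInf adj v x ≤ 0)
    (hb : ∀ x ∈ bdry adj K, u x ≤ v x) :
    ∀ x ∈ K ∪ bdry adj K, u x ≤ v x := by
  classical
  -- neighbors of points of K lie in K ∪ bdry
  have hnbS : ∀ x ∈ K, ∀ y, adj x y → y ∈ K ∪ bdry adj K := by
    intro x hx y hxy
    by_cases hyK : y ∈ K
    · exact Or.inl hyK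
    · exact Or.inr ⟨hyK, x, hx, hxy⟩
  set S : Finset V := (K ∪ bdry adj K).toFinset with hS
  have hmemS : ∀ z : V, z ∈ S ↔ z ∈ K ∪ bdry adj K := fun z => Set.mem_toFinset
  have hSne : S.Nonempty := by
    obtain ⟨x, hx⟩ := hK; exact ⟨x, (hmemS x).2 (Or.inl hx)⟩
  obtain ⟨x₁, hx₁S, hx₁max⟩ := S.exists_max_image (fun z => u z - v z) hSne
  set M := u x₁ - v x₁ with hM
  set A : Finset V := S.filter (fun z => u z - v z = M) with hA
  have hAne : A.Nonempty := ⟨x₁, Finset.mem_filter.2 ⟨hx₁S, rfl⟩⟩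
  obtain ⟨x₀, hx₀A, hx₀max⟩ := A.exists_max_image u hAne
  -- key propagation step
  have key : ∀ x, x ∈ K → u x - v x = M → u x = u x₀ →
      ∀ y, adj x y → (u y - v y = M ∧ u y = u x₀) := by
    intro x hxK hPx hux
    set N : Set V := {y | adj x y} with hN
    have hNne : N.Nonempty := by
      obtain ⟨w, _, l, hch, _⟩ := hconn x hxK
      cases l with
      | nil =>
        simp only [List.nil_append] at hch
        exact ⟨w, (List.chain_cons.1 hch).1⟩
      | cons z l' =>
        simp only [List.cons_append] at hch
        exact ⟨z, (List.chain_cons.1 hch).1⟩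
    set fu : Set ℝ := (fun y => u y - u x) '' N with hfu
    set fv : Set ℝ := (fun y => v y - v x) '' N with hfv
    have hfu_fin : fu.Finite := (Set.toFinite N).image _
    have hfv_fin : fv.Finite := (Set.toFinite N).image _
    have hfu_ne : fu.Nonempty := hNne.image _
    have hfv_ne : fv.Nonempty := hNne.image _
    set Su := sSup fu with hSu
    set su := sInf fu with hsu
    set Sv := sSup fv with hSv
    set sv := sInf fv with hsv
    -- neighbors are dominated by M
    have hyM : ∀ y ∈ N, u y - v y ≤ M := by
      intro y hy
      exact hx₁max y ((hmemS y).2 (hnbS x hxK y hy))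
    have hcomp : ∀ y ∈ N, u y - u x ≤ v y - v x := by
      intro y hy; have := hyM y hy; linarith
    -- attainment and bounds
    obtain ⟨ySu, hySu, hySu_eq⟩ := hfu_ne.csSup_mem hfu_fin
    obtain ⟨ysv, hysv, hysv_eq⟩ := hfv_ne.csInf_mem hfv_fin
    have hle_Sv : ∀ y ∈ N, v y - v x ≤ Sv := fun y hy =>
      le_csSup hfv_fin.bddAbove ⟨y, hy, rfl⟩
    have hle_Su : ∀ y ∈ N, u y - u x ≤ Su := fun y hy =>
      le_csSup hfu_fin.bddAbove ⟨y, hy, rfl⟩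
    have hge_su : ∀ y ∈ N, su ≤ u y - u x := fun y hy =>
      csInf_le hfu_fin.bddBelow ⟨y, hy, rfl⟩
    have hge_sv : ∀ y ∈ N, sv ≤ v y - v x := fun y hy =>
      csInf_le hfv_fin.bddBelow ⟨y, hy, rfl⟩
    have hySu_eq' : u ySu - u x = Su := hySu_eq
    have hysv_eq' : v ysv - v x = sv := hysv_eq
    have hSuSv : Su ≤ Sv := by
      have := le_trans (hcomp ySu hySu) (hle_Sv ySu hySu); linarith
    have hsusv : su ≤ sv := by
      have := le_trans (hge_su ysv hysv) (hcomp ysv hysv); linarith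
    have hu' : 0 ≤ Su + su := by
      have := hu x hxK; simpa only [lapInf] using this
    have hv' : Sv + sv ≤ 0 := by
      have := hv x hxK; simpa only [lapInf] using this
    -- the max achiever for u is also a maximizer of u - v
    have hySuM : u ySu - v ySu = M := by
      have h1 := hySu_eq'
      have h2 : v ySu - v x ≤ Sv := hle_Sv ySu hySu
      have h3 : u ySu - v ySu ≤ M := hyM ySu hySu
      linarith
    have hySuA : ySu ∈ A := Finset.mem_filter.2
      ⟨(hmemS ySu).2 (hnbS x hxK ySu hySu), hySuM⟩
    have hSu0 : Su ≤ 0 := by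
      have := hx₀max ySu hySuA
      linarith [hySu_eq']
    have hsuSu : su ≤ Su := le_trans (hge_su ySu hySu) (hle_Su ySu hySu)
    have hSueq : Su = 0 := by linarith
    have hsueq : su = 0 := by linarith
    have hSveq : Sv = 0 := by linarith
    have hsveq : sv = 0 := by linarith
    intro y hy
    have h1 : u y - u x = 0 :=
      le_antisymm (hSueq ▸ hle_Su y hy) (hsueq ▸ hge_su y hy)
    have h2 : v y - v x = 0 :=
      le_antisymm (hSveq ▸ hle_Sv y hy) (hsveq ▸ hge_sv y hy)
    constructor
    · linarith
    · linarith
  -- propagate along a path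
  have prop : ∀ l : List V, ∀ x, x ∈ K → u x - v x = M → u x = u x₀ →
      ∀ y, List.Chain adj x (l ++ [y]) → (∀ z ∈ l, z ∈ K) → u y - v y = M := by
    intro l
    induction l with
    | nil =>
      intro x hxK hPx hux y hch _
      simp only [List.nil_append] at hch
      exact (key x hxK hPx hux y (List.chain_cons.1 hch).1).1
    | cons z l' ih =>
      intro x hxK hPx hux y hch hl
      simp only [List.cons_append] at hch
      have h1 := (List.chain_cons.1 hch).1
      have h2 := (List.chain_cons.1 hch).2
      have hzK : z ∈ K := hl z List.mem_cons_self
      have hz := key x hxK hPx hux z h1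
      exact ih z hzK hz.1 hz.2 y h2 (fun w hw => hl w (List.mem_cons_of_mem _ hw))
  have hx₀S := (Finset.mem_filter.1 hx₀A).1
  have hx₀M : u x₀ - v x₀ = M := (Finset.mem_filter.1 hx₀A).2
  have hM0 : M ≤ 0 := by
    rcases (hmemS x₀).1 hx₀S with hx₀K | hx₀b
    · obtain ⟨y, hyb, l, hch, hl⟩ := hconn x₀ hx₀K
      have h1 := prop l x₀ hx₀K hx₀M rfl y hch hl
      have h2 := hb y hyb
      linarith
    · have := hb x₀ hx₀b; linarith
  intro x hx
  have := hx₁max x ((hmemS x).2 hx)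
  linarith
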